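/- Let Γ be an infinite countable discrete group with the property that for every orthogonal representation π of Γ on a real Hilbert space and every cocycle b : Γ → H for π, there exists an infinite subset X ⊆ Γ on which b is bounded (this holds in particular whenever Γ does not have the Haagerup property). Let Λ be a group with more than one element, and form the wreath product Λ ≀ Γ = (⊕_Γ Λ) ⋊ Γ. Then for every orthogonal representation π of Λ ≀ Γ on a real Hilbert space and every cocycle b : Λ ≀ Γ → H for π, there exist an infinite subset S ⊆ ⊕_Γ Λ and a constant K ≥ 0 with ‖b(s)‖ ≤ K for all s ∈ S; in particular the restriction of b to the subgroup ⊕_Γ Λ is never proper. -/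

import Mathlib

/-- The subgroup of finitely supported functions `χ → Λ` inside the full product group,
i.e. the restricted direct sum `⊕_χ Λ`. -/
def finSuppSubgroup (χ Λ : Type*) [Group Λ] : Subgroup (χ → Λ) where
  carrier := {f : χ → Λ | (Function.mulSupport f).Finite}
  one_mem' := by simp
  mul_mem' := by
    intro f g hf hg
    exact Set.Finite.subset (hf.union hg) (Function.mulSupport_mul f g)
  inv_mem' := by
    intro f hf
    simpa using hf

/-- The coordinate-permutation action of `γ : Γ` on `⊕_χ Λ`, `(γ • f)(x) = f(γ⁻¹ • x)`. -/
def wreathSmul (Γ χ Λ : Type*) [Group Γ] [Group Λ] [MulAction Γ χ] (γ : Γ)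
    (f : finSuppSubgroup χ Λ) : finSuppSubgroup χ Λ :=
  ⟨fun x => f.1 (γ⁻¹ • x), by
    show (Function.mulSupport fun x => f.1 (γ⁻¹ • x)).Finite
    have h : (Function.mulSupport fun x => f.1 (γ⁻¹ • x)) =
        (fun x => γ⁻¹ • x) ⁻¹' Function.mulSupport f.1 := rfl
    rw [h]
    exact Set.Finite.preimage ((MulAction.injective γ⁻¹).injOn) f.2⟩

/-- The action of `Γ` on `⊕_χ Λ` by permuting coordinates, as a homomorphism into the
automorphism group, used to form the generalized wreath product `Λ ≀_χ Γ = (⊕_χ Λ) ⋊ Γ`. -/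
def wreathAut (Γ χ Λ : Type*) [Group Γ] [Group Λ] [MulAction Γ χ] :
    Γ →* MulAut ↥(finSuppSubgroup χ Λ) where
  toFun γ :=
    { toFun := wreathSmul Γ χ Λ γ
      invFun := wreathSmul Γ χ Λ γ⁻¹
      left_inv := by
        intro f
        apply Subtype.ext
        funext x
        simp [wreathSmul]
      right_inv := by
        intro f
        apply Subtype.ext
        funext x
        simp [wreathSmul]
      map_mul' := by intro f g; rfl }
  map_one' := by
    refine MulEquiv.ext fun f => Subtype.ext (funext fun x => ?_)
    simp [wreathSmul]
  map_mul' := by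
    intro γ δ
    refine MulEquiv.ext fun f => Subtype.ext (funext fun x => ?_)
    simp [wreathSmul, mul_smul] <;> rfl

/-- The action of `Γ` on a disjoint union (sigma type) of `Γ`-sets. -/
instance sigmaMulAction {Γ : Type*} [Group Γ] {ι : Type*} {X : ι → Type*}
    [∀ i, MulAction Γ (X i)] : MulAction Γ ((i : ι) × X i) where
  smul γ p := ⟨p.1, γ • p.2⟩
  one_smul := by rintro ⟨i, x⟩; show Sigma.mk i _ = _; rw [one_smul]
  mul_smul := by rintro γ δ ⟨i, x⟩; show Sigma.mk i _ = _; rw [mul_smul]; rfl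

/-- A real Hilbert space `H` together with an orthogonal representation `π` of `G` on `H`
(a homomorphism into the group of linear isometric bijections of `H`) and a cocycle
`b : G → H` for `π`, i.e. `b(gh) = b(g) + π(g)(b(h))`. -/
structure OrthogonalCocycle (G : Type*) [Group G] where
  /-- the underlying real Hilbert space -/
  H : Type*
  [normedAddCommGroup : NormedAddCommGroup H]
  [innerProductSpace : InnerProductSpace ℝ H]
  [completeSpace : CompleteSpace H]
  /-- the orthogonal representation -/
  π : G →* (H ≃ₗᵢ[ℝ] H)
  /-- the cocycle -/
  b : G → H
  cocycle : ∀ g h : G, b (g * h) = b g + π g (b h)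

attribute [instance] OrthogonalCocycle.normedAddCommGroup
  OrthogonalCocycle.innerProductSpace OrthogonalCocycle.completeSpace

section Aux
variable {G : Type*} [Group G] (c : OrthogonalCocycle G)

theorem OrthogonalCocycle.b_one : c.b 1 = 0 := by
  have h := c.cocycle 1 1
  rw [mul_one, map_one] at h
  simpa using h

theorem OrthogonalCocycle.norm_b_inv (g : G) : ‖c.b g⁻¹‖ = ‖c.b g‖ := by
  have h := c.cocycle g g⁻¹
  rw [mul_inv_cancel, c.b_one] at h
  have : c.π g (c.b g⁻¹) = - c.b g := by
    have := h.symm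
    linear_combination (norm := module) this
  calc ‖c.b g⁻¹‖ = ‖c.π g (c.b g⁻¹)‖ := ((c.π g).norm_map _).symm
    _ = ‖c.b g‖ := by rw [this, norm_neg]

theorem OrthogonalCocycle.norm_b_mul_le (g h : G) :
    ‖c.b (g * h)‖ ≤ ‖c.b g‖ + ‖c.b h‖ := by
  rw [c.cocycle g h]
  calc ‖c.b g + c.π g (c.b h)‖ ≤ ‖c.b g‖ + ‖c.π g (c.b h)‖ := norm_add_le _ _
    _ = ‖c.b g‖ + ‖c.b h‖ := by rw [(c.π g).norm_map]

end Aux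

universe uG uH uH2

/-- Universe transfer: any cocycle of a countable group admits a cocycle in any other
universe with the same norms (via the separable invariant subspace spanned by its values). -/
theorem OrthogonalCocycle.exists_small {G : Type uG} [Group G] [Countable G]
    (c : OrthogonalCocycle.{uG, uH2} G) :
    ∃ c' : OrthogonalCocycle.{uG, uH} G, ∀ g, ‖c'.b g‖ = ‖c.b g‖ := by
  classical
  set V : Submodule ℝ c.H := (Submodule.span ℝ (Set.range c.b)).topologicalClosure with hVdef
  have hVset : (V : Set c.H) =
      closure ((Submodule.span ℝ (Set.range c.b) : Submodule ℝ c.H) : Set c.H) :=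
    Submodule.topologicalClosure_coe _
  have hbV : ∀ g, c.b g ∈ V := fun g =>
    Submodule.le_topologicalClosure _ (Submodule.subset_span (Set.mem_range_self g))
  have key : ∀ (g h : G) (x : c.H), c.π g (c.π h x) = c.π (g * h) x := by
    intro g h x; rw [map_mul]; rfl
  have key1 : ∀ x : c.H, c.π 1 x = x := by intro x; rw [map_one]; rfl
  have hspan : ∀ g : G, ∀ y ∈ Submodule.span ℝ (Set.range c.b),
      c.π g y ∈ Submodule.span ℝ (Set.range c.b) := by
    intro g y hy
    induction hy using Submodule.span_induction with
    | mem z hz =>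
        obtain ⟨h, rfl⟩ := hz
        have hz' : c.π g (c.b h) = c.b (g * h) - c.b g := by rw [c.cocycle]; abel
        rw [hz']
        exact sub_mem (Submodule.subset_span ⟨g * h, rfl⟩) (Submodule.subset_span ⟨g, rfl⟩)
    | zero => rw [map_zero]; exact Submodule.zero_mem _
    | add a b _ _ ha hb => rw [map_add]; exact Submodule.add_mem _ ha hb
    | smul r a _ ha => rw [map_smul]; exact Submodule.smul_mem _ r ha
  have hinv : ∀ g : G, ∀ x ∈ V, c.π g x ∈ V := by
    intro g x hx
    have hx' : x ∈ closure ((Submodule.span ℝ (Set.range c.b) : Submodule ℝ c.H) : Set c.H) := by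
      rw [← hVset]; exact hx
    have h1 : c.π g x ∈
        closure (c.π g '' ((Submodule.span ℝ (Set.range c.b) : Submodule ℝ c.H) : Set c.H)) :=
      image_closure_subset_closure_image (c.π g).continuous ⟨x, hx', rfl⟩
    have h2 : c.π g '' ((Submodule.span ℝ (Set.range c.b) : Submodule ℝ c.H) : Set c.H) ⊆
        ((Submodule.span ℝ (Set.range c.b) : Submodule ℝ c.H) : Set c.H) := by
      rintro _ ⟨y, hy, rfl⟩; exact hspan g y hy
    show c.π g x ∈ (V : Set c.H)
    rw [hVset]
    exact closure_mono h2 h1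
  haveI : CompleteSpace V := Submodule.topologicalClosure.completeSpace _
  let ρ : G → (V ≃ₗ[ℝ] V) := fun g =>
    { toFun := fun x => ⟨c.π g x.1, hinv g x.1 x.2⟩
      map_add' := fun x y => Subtype.ext (map_add (c.π g) x.1 y.1)
      map_smul' := fun r x => Subtype.ext (map_smul (c.π g) r x.1)
      invFun := fun x => ⟨c.π g⁻¹ x.1, hinv g⁻¹ x.1 x.2⟩
      left_inv := fun x => Subtype.ext (by
        show c.π g⁻¹ (c.π g x.1) = x.1
        rw [key, inv_mul_cancel, key1])
      right_inv := fun x => Subtype.ext (by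
        show c.π g (c.π g⁻¹ x.1) = x.1
        rw [key, mul_inv_cancel, key1]) }
  let πV : G →* (V ≃ₗᵢ[ℝ] V) :=
    { toFun := fun g => ⟨ρ g, fun x => (c.π g).norm_map x.1⟩
      map_one' := by
        refine LinearIsometryEquiv.ext fun x => Subtype.ext ?_
        show c.π 1 x.1 = x.1
        exact key1 x.1
      map_mul' := by
        intro g h
        refine LinearIsometryEquiv.ext fun x => Subtype.ext ?_
        show c.π (g * h) x.1 = c.π g (c.π h x.1)
        rw [key] }
  let bV : G → V := fun g => ⟨c.b g, hbV g⟩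
  have cocycleV : ∀ g h, bV (g * h) = bV g + πV g (bV h) := fun g h =>
    Subtype.ext (c.cocycle g h)
  -- separability of V
  have hsep : TopologicalSpace.IsSeparable (V : Set c.H) := by
    rw [hVset]
    exact ((Set.countable_range c.b).isSeparable.span).closure
  haveI hsepV : TopologicalSpace.SeparableSpace V := hsep.separableSpace
  obtain ⟨w, bb, hbb⟩ := exists_hilbertBasis ℝ V
  have horth : Orthonormal ℝ ((↑) : w → V) := hbb ▸ bb.orthonormal
  have hwc : w.Countable := by
    apply Set.PairwiseDisjoint.countable_of_isOpen
      (s := fun x : V => Metric.ball x (1 / 2)) (a := w)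
    · intro x hx y hy hxy
      have h1 : ‖((⟨x, hx⟩ : w) : V)‖ = 1 := horth.1 ⟨x, hx⟩
      have h2 : ‖((⟨y, hy⟩ : w) : V)‖ = 1 := horth.1 ⟨y, hy⟩
      have h3 : (inner ℝ x y : ℝ) = 0 := horth.2
        (show (⟨x, hx⟩ : w) ≠ ⟨y, hy⟩ from fun hc => hxy (congrArg Subtype.val hc))
      have h0 : ‖x - y‖ ^ 2 = 2 := by
        rw [norm_sub_sq_real]
        simp only at h1 h2
        rw [h1, h2, h3]; ring
      have hd : 1 ≤ dist x y := by
        rw [dist_eq_norm]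
        nlinarith [norm_nonneg (x - y)]
      exact Metric.ball_disjoint_ball (by linarith)
    · intro i _; exact Metric.isOpen_ball
    · intro i _; exact ⟨i, Metric.mem_ball_self (by norm_num)⟩
  haveI : Countable w := hwc.to_subtype
  obtain ⟨f0, hf0⟩ := Countable.exists_injective_nat w
  let qq : ULift.{uH} (Set.range f0) ≃ w := Equiv.ulift.trans (Equiv.ofInjective f0 hf0).symm
  let vfam : ULift.{uH} (Set.range f0) → V := fun i => (qq i : V)
  have hvo : Orthonormal ℝ vfam := horth.comp qq qq.injective
  have hsp : ⊤ ≤ (Submodule.span ℝ (Set.range vfam)).topologicalClosure := by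
    have hr : Set.range vfam = w := by
      rw [show vfam = ((↑) : w → V) ∘ qq from rfl, Set.range_comp, Equiv.range_eq_univ,
        Set.image_univ, Subtype.range_coe]
    rw [hr]
    have hd := bb.dense_span
    rw [hbb, Subtype.range_coe] at hd
    exact le_of_eq hd.symm
  let B : HilbertBasis (ULift.{uH} (Set.range f0)) ℝ V := HilbertBasis.mk hvo hsp
  let E := B.repr
  refine ⟨{ H := lp (fun _ : ULift.{uH} (Set.range f0) => ℝ) 2
            π := { toFun := fun g => (E.symm.trans (πV g)).trans E
                   map_one' := by
                     refine LinearIsometryEquiv.ext fun x => ?_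
                     simp [E, LinearIsometryEquiv.trans_apply]
                   map_mul' := by
                     intro g h
                     refine LinearIsometryEquiv.ext fun x => ?_
                     simp [E, LinearIsometryEquiv.trans_apply, map_mul,
                       LinearIsometryEquiv.coe_mul, Function.comp,
                       LinearIsometryEquiv.symm_apply_apply] }
            b := fun g => E (bV g)
            cocycle := fun g h => by
              show E (bV (g * h)) = E (bV g) + E ((πV g) (E.symm (E (bV h))))
              rw [LinearIsometryEquiv.symm_apply_apply, cocycleV g h, map_add] }, ?_⟩
  intro g
  show ‖E (bV g)‖ = ‖c.b g‖
  rw [E.norm_map]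
  rfl


/-- Let `Γ` be an infinite countable discrete group such that every cocycle
into an orthogonal representation of `Γ` is bounded on some infinite subset of `Γ` (e.g. `Γ`
without the Haagerup property), and let `Λ` be a nontrivial group.  Then for every cocycle
`b` into an orthogonal representation of the wreath product `Λ ≀ Γ = (⊕_Γ Λ) ⋊ Γ` (where `Γ`
acts on `χ = Γ` by left translation), there is an infinite subset `S` of the base group
`⊕_Γ Λ` on which `b` is bounded; in particular the restriction of `b` to `⊕_Γ Λ` is never
proper. -/
theorem wreath_cocycle_bounded_on_infinite_base_subset
    (Γ Λ : Type*) [Group Γ] [Group Λ] [Countable Γ] [Infinite Γ] [Nontrivial Λ]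
    (hΓ : ∀ c : OrthogonalCocycle Γ, ∃ X : Set Γ, X.Infinite ∧
      ∃ C : ℝ, ∀ x ∈ X, ‖c.b x‖ ≤ C)
    (c : OrthogonalCocycle (↥(finSuppSubgroup Γ Λ) ⋊[wreathAut Γ Γ Λ] Γ)) :
    (∃ S : Set ↥(finSuppSubgroup Γ Λ), S.Infinite ∧ ∃ K : ℝ, 0 ≤ K ∧
        ∀ s ∈ S, ‖c.b (SemidirectProduct.inl s)‖ ≤ K) ∧
      ¬ (∀ K : ℝ, 0 ≤ K →
          {s : ↥(finSuppSubgroup Γ Λ) | ‖c.b (SemidirectProduct.inl s)‖ ≤ K}.Finite) := by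
  classical
  obtain ⟨l0, hl0⟩ := exists_ne (1 : Λ)
  -- the delta functions
  have δmem : ∀ x : Γ, (fun y => if y = x then l0 else 1) ∈ finSuppSubgroup Γ Λ := by
    intro x
    apply Set.Finite.subset (Set.finite_singleton x)
    intro y hy
    simp only [Function.mem_mulSupport] at hy
    by_contra h
    simp only [Set.mem_singleton_iff] at h
    simp [h] at hy
  set δ : Γ → ↥(finSuppSubgroup Γ Λ) := fun x => ⟨fun y => if y = x then l0 else 1, δmem x⟩
    with hδ
  have δinj : Function.Injective δ := by
    intro x x' h
    by_contra hne
    have := congrFun (congrArg Subtype.val h) x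
    simp only [hδ, if_pos rfl] at this
    rw [if_neg hne] at this
    exact hl0 this
  -- restricted cocycle on Γ
  set c' : OrthogonalCocycle Γ :=
    { H := c.H
      π := c.π.comp SemidirectProduct.inr
      b := fun γ => c.b (SemidirectProduct.inr γ)
      cocycle := fun g h => by
        simp only [MonoidHom.comp_apply]
        rw [map_mul, c.cocycle] } with hc'
  obtain ⟨c'', hb''⟩ := c'.exists_small
  obtain ⟨X, hXinf, C, hC0⟩ := hΓ c''
  have hC : ∀ x ∈ X, ‖c.b (SemidirectProduct.inr x)‖ ≤ C := by
    intro x hx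
    have := hC0 x hx
    rwa [hb''] at this
  have hC0 : 0 ≤ C := by
    obtain ⟨x, hx⟩ := hXinf.nonempty
    exact le_trans (norm_nonneg _) (hC x hx)
  -- conjugation identity
  have hconj : ∀ x : Γ, (SemidirectProduct.inl (δ x) :
      ↥(finSuppSubgroup Γ Λ) ⋊[wreathAut Γ Γ Λ] Γ) =
      SemidirectProduct.inr x * SemidirectProduct.inl (δ 1) * SemidirectProduct.inr x⁻¹ := by
    intro x
    rw [← SemidirectProduct.inl_aut]
    congr 1
    apply Subtype.ext
    funext y
    show (if y = x then l0 else 1) = (if x⁻¹ • y = 1 then l0 else 1)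
    by_cases h : y = x
    · subst h; simp
    · rw [if_neg h, if_neg fun hc => h (by
        rw [smul_eq_mul, inv_mul_eq_one] at hc
        exact hc.symm)]
  set K : ℝ := C + ‖c.b (SemidirectProduct.inl (δ 1))‖ + C with hK
  have hK0 : 0 ≤ K := by positivity
  have hbound : ∀ x ∈ X, ‖c.b (SemidirectProduct.inl (δ x))‖ ≤ K := by
    intro x hx
    rw [hconj x]
    calc ‖c.b (SemidirectProduct.inr x * SemidirectProduct.inl (δ 1) *
          SemidirectProduct.inr x⁻¹)‖
        ≤ ‖c.b (SemidirectProduct.inr x * SemidirectProduct.inl (δ 1))‖ +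
          ‖c.b (SemidirectProduct.inr x⁻¹)‖ := c.norm_b_mul_le _ _
      _ ≤ ‖c.b (SemidirectProduct.inr x)‖ + ‖c.b (SemidirectProduct.inl (δ 1))‖ +
          ‖c.b (SemidirectProduct.inr x⁻¹)‖ := by
            have := c.norm_b_mul_le (SemidirectProduct.inr x) (SemidirectProduct.inl (δ 1))
            linarith
      _ ≤ K := by
            have h1 : ‖c.b (SemidirectProduct.inr x)‖ ≤ C := hC x hx
            have h2 : ‖c.b (SemidirectProduct.inr x⁻¹)‖ ≤ C := by
              rw [map_inv, c.norm_b_inv]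
              exact h1
            rw [hK]; linarith
  have main : ∃ S : Set ↥(finSuppSubgroup Γ Λ), S.Infinite ∧ ∃ K : ℝ, 0 ≤ K ∧
      ∀ s ∈ S, ‖c.b (SemidirectProduct.inl s)‖ ≤ K := by
    refine ⟨δ '' X, hXinf.image δinj.injOn, K, hK0, ?_⟩
    rintro s ⟨x, hx, rfl⟩
    exact hbound x hx
  refine ⟨main, fun hfin => ?_⟩
  obtain ⟨S, hSinf, K', hK'0, hS⟩ := main
  exact Set.Infinite.mono (fun s hs => hS s hs) hSinf (hfin K' hK'0)
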